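/- Let {x_k} be a sequence in X that is total over X_F^*. Then the set X_{d₁}^* = { {T(x_k,a₂,…,aₙ)}ₖ : T ∈ X_F^* } is a linear subspace of 𝕂^ℕ, the assignment ‖{T(x_k,a₂,…,aₙ)}ₖ‖ := ‖T‖ (T ∈ X_F^*) is a well-defined norm on X_{d₁}^*, and X_{d₁}^* is a Banach space with respect to this norm. -/

import Mathlib

open Filter Finset

/-- The axioms of an `(n+1)`-norm (Gahler / Gunawan-Mashadi) on a vector space `X` over `𝕂`:
it vanishes exactly on linearly dependent tuples, is invariant under permutations, and is
absolutely homogeneous and subadditive in the first variable (hence, by permutation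
invariance, in each variable). -/
structure IsNNorm (𝕂 : Type*) {X : Type*} {n : ℕ} [RCLike 𝕂] [AddCommGroup X] [Module 𝕂 X]
    (N : (Fin (n + 1) → X) → ℝ) : Prop where
  eq_zero_iff : ∀ v : Fin (n + 1) → X, N v = 0 ↔ ¬ LinearIndependent 𝕂 v
  perm_invariant : ∀ (v : Fin (n + 1) → X) (σ : Equiv.Perm (Fin (n + 1))), N (v ∘ σ) = N v
  smul_left : ∀ (c : 𝕂) (z : X) (w : Fin n → X),
    N (Fin.cons (c • z) w) = ‖c‖ * N (Fin.cons z w)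
  add_left : ∀ (z z' : X) (w : Fin n → X),
    N (Fin.cons (z + z') w) ≤ N (Fin.cons z w) + N (Fin.cons z' w)

/-- `X` is an `n`-Banach space with respect to the `(n+1)`-norm `N`: every sequence that is
Cauchy with respect to the `n`-norm converges. -/
def IsNBanach {X : Type*} {n : ℕ} [AddCommGroup X] (N : (Fin (n + 1) → X) → ℝ) : Prop :=
  ∀ x : ℕ → X,
    (∀ e : Fin n → X,
      Tendsto (fun p : ℕ × ℕ => N (Fin.cons (x p.1 - x p.2) e)) atTop (nhds 0)) →
    ∃ y : X, ∀ e : Fin n → X,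
      Tendsto (fun k => N (Fin.cons (x k - y) e)) atTop (nhds 0)

/-- `(x, S)` is a retro Banach frame associated to `(a₂, …, aₙ)` for `X_F^* = X →L[𝕂] 𝕂`
(the space of bounded `b`-linear functionals, encoded via the seminorm
`‖z‖ = ‖z, a₂, …, aₙ‖` on `X`) with respect to the Banach space of scalar sequences `D`
(realized as a subspace of `𝕂^ℕ` via an injective linear inclusion `j`), with
frame bounds `0 < A ≤ B`. -/
def RetroBanachFrame {𝕂 X D : Type*} [RCLike 𝕂] [SeminormedAddCommGroup X]
    [NormedSpace 𝕂 X] [NormedAddCommGroup D] [NormedSpace 𝕂 D]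
    (j : D →ₗ[𝕂] (ℕ → 𝕂)) (x : ℕ → X) (S : D →L[𝕂] (X →L[𝕂] 𝕂)) (A B : ℝ) : Prop :=
  0 < A ∧ A ≤ B ∧
    ∀ T : X →L[𝕂] 𝕂, ∃ c : D, j c = (fun k => T (x k)) ∧
      A * ‖T‖ ≤ ‖c‖ ∧ ‖c‖ ≤ B * ‖T‖ ∧ S c = T

/-- `{x_k}` is a retro Banach Bessel sequence associated to `(a₂, …, aₙ)` for
`X_F^* = X →L[𝕂] 𝕂` with respect to `D`, with Bessel bound `K`. -/
def RetroBesselSeq {𝕂 X D : Type*} [RCLike 𝕂] [SeminormedAddCommGroup X]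
    [NormedSpace 𝕂 X] [NormedAddCommGroup D] [NormedSpace 𝕂 D]
    (j : D →ₗ[𝕂] (ℕ → 𝕂)) (x : ℕ → X) (K : ℝ) : Prop :=
  0 < K ∧ ∀ T : X →L[𝕂] 𝕂, ∃ c : D, j c = (fun k => T (x k)) ∧ ‖c‖ ≤ K * ‖T‖

/-- `{x_k}` is total over `X_F^* = X →L[𝕂] 𝕂`. -/
def TotalOver (𝕂 : Type*) {X : Type*} [RCLike 𝕂] [SeminormedAddCommGroup X]
    [NormedSpace 𝕂 X] (x : ℕ → X) : Prop :=
  ∀ T : X →L[𝕂] 𝕂, (∀ k, T (x k) = 0) → T = 0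

/-- A sequence of reals is positively confined if `0 < inf α_k` and `sup α_k < ∞`. -/
def PositivelyConfined (α : ℕ → ℝ) : Prop :=
  0 < ⨅ k, α k ∧ BddAbove (Set.range α)

/-- The norm of the sequence space `D` (included in `𝕂^ℕ` via `j`) is solid. -/
def SolidNorm {𝕂 D : Type*} [RCLike 𝕂] [NormedAddCommGroup D] [NormedSpace 𝕂 D]
    (j : D →ₗ[𝕂] (ℕ → 𝕂)) : Prop :=
  ∀ (γ : ℕ → 𝕂) (c : D), 0 < ⨅ k, ‖γ k‖ → BddAbove (Set.range fun k => ‖γ k‖) →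
    ∃ d : D, j d = (fun k => γ k * j c k) ∧
      (⨅ k, ‖γ k‖) * ‖c‖ ≤ ‖d‖ ∧ ‖d‖ ≤ (⨆ k, ‖γ k‖) * ‖c‖

theorem statement2
    {𝕂 : Type*} [RCLike 𝕂] {X : Type*} [SeminormedAddCommGroup X] [NormedSpace 𝕂 X]
    {n : ℕ} (hn : 1 ≤ n) {N : (Fin (n + 1) → X) → ℝ} (hN : IsNNorm 𝕂 N)
    (hXBanach : IsNBanach N) {a : Fin n → X} (ha : ∀ z : X, ‖z‖ = N (Fin.cons z a))
    (x : ℕ → X) (htotal : TotalOver 𝕂 x) :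
    ∃ (W : Submodule 𝕂 (ℕ → 𝕂)) (nw : W → ℝ),
      (W : Set (ℕ → 𝕂)) = Set.range (fun T : X →L[𝕂] 𝕂 => fun k => T (x k)) ∧
      (∀ T : X →L[𝕂] 𝕂, (fun k => T (x k)) ∈ W) ∧
      (∀ (T : X →L[𝕂] 𝕂) (h : (fun k => T (x k)) ∈ W), nw ⟨fun k => T (x k), h⟩ = ‖T‖) ∧
      (∀ c : W, 0 ≤ nw c) ∧
      (∀ c : W, nw c = 0 ↔ c = 0) ∧
      (∀ c d : W, nw (c + d) ≤ nw c + nw d) ∧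
      (∀ (γ : 𝕂) (c : W), nw (γ • c) = ‖γ‖ * nw c) ∧
      (∀ u : ℕ → W,
        (∀ ε : ℝ, 0 < ε → ∃ n₀ : ℕ, ∀ p q : ℕ, n₀ ≤ p → n₀ ≤ q → nw (u p - u q) < ε) →
        ∃ c : W, Tendsto (fun k => nw (u k - c)) atTop (nhds 0)) := by
  classical
  let Φ : (X →L[𝕂] 𝕂) →ₗ[𝕂] (ℕ → 𝕂) :=
    { toFun := fun T => fun k => T (x k)
      map_add' := fun T S => by ext k; simp
      map_smul' := fun c T => by ext k; simp }
  have hΦinj : Function.Injective Φ := by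
    intro T S h
    have h0 : ∀ k, (T - S) (x k) = 0 := by
      intro k
      have := congrFun h k
      simp only [Φ, LinearMap.coe_mk, AddHom.coe_mk] at this
      simp [this]
    have := htotal (T - S) h0
    exact sub_eq_zero.mp this
  set W := LinearMap.range Φ with hW
  have hmem : ∀ T : X →L[𝕂] 𝕂, (fun k => T (x k)) ∈ W := fun T => ⟨T, rfl⟩
  let pre : W → (X →L[𝕂] 𝕂) := fun c => (LinearMap.mem_range.mp c.2).choose
  have hpre : ∀ c : W, Φ (pre c) = (c : ℕ → 𝕂) := fun c =>
    (LinearMap.mem_range.mp c.2).choose_spec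
  have huniq : ∀ (T : X →L[𝕂] 𝕂) (c : W), Φ T = (c : ℕ → 𝕂) → pre c = T := by
    intro T c h
    exact hΦinj (by rw [hpre c, h])
  let nw : W → ℝ := fun c => ‖pre c‖
  have hsub : ∀ c d : W, pre (c - d) = pre c - pre d := by
    intro c d
    refine huniq _ _ ?_
    rw [map_sub, hpre c, hpre d]; rfl
  refine ⟨W, nw, ?_, hmem, ?_, ?_, ?_, ?_, ?_, ?_⟩
  · ext y
    constructor
    · rintro ⟨T, rfl⟩; exact ⟨T, rfl⟩
    · rintro ⟨T, rfl⟩; exact ⟨T, rfl⟩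
  · intro T h
    have : pre ⟨fun k => T (x k), h⟩ = T := huniq T _ rfl
    simp [nw, this]
  · intro c; exact norm_nonneg _
  · intro c
    constructor
    · intro h0
      have hz : ∀ k, pre c (x k) = 0 := by
        intro k
        have h1 : ‖pre c (x k)‖ ≤ ‖pre c‖ * ‖x k‖ := (pre c).le_opNorm (x k)
        rw [show ‖pre c‖ = 0 from h0, zero_mul] at h1
        exact norm_le_zero_iff.mp h1
      apply Subtype.ext
      have := hpre c
      rw [← this]
      have : Φ (pre c) = 0 := by
        funext k
        simp [Φ, hz k]
      simp [this]
    · rintro rfl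
      have : pre (0 : W) = 0 := huniq 0 0 (by simp)
      simp [nw, this]
  · intro c d
    have hadd : pre (c + d) = pre c + pre d := by
      refine huniq _ _ ?_
      rw [map_add, hpre c, hpre d]; rfl
    simpa [nw, hadd] using norm_add_le (pre c) (pre d)
  · intro γ c
    have hsmul : pre (γ • c) = γ • pre c := by
      refine huniq _ _ ?_
      rw [map_smul, hpre c]; rfl
    simp only [nw, hsmul]
    exact norm_smul γ (pre c)
  · intro u hu
    set T : ℕ → (X →L[𝕂] 𝕂) := fun k => pre (u k)
    have hcau : CauchySeq T := by
      rw [Metric.cauchySeq_iff]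
      intro ε hε
      obtain ⟨n₀, hn₀⟩ := hu ε hε
      refine ⟨n₀, fun p hp q hq => ?_⟩
      have := hn₀ p q hp hq
      rw [dist_eq_norm]
      calc ‖T p - T q‖ = ‖pre (u p - u q)‖ := by rw [hsub]
        _ < ε := this
    obtain ⟨Tl, hTl⟩ := cauchySeq_tendsto_of_complete hcau
    refine ⟨⟨Φ Tl, ⟨Tl, rfl⟩⟩, ?_⟩
    have hk : ∀ k, nw (u k - ⟨Φ Tl, ⟨Tl, rfl⟩⟩) = ‖T k - Tl‖ := by
      intro k
      have : pre ((⟨Φ Tl, ⟨Tl, rfl⟩⟩ : W)) = Tl := huniq Tl _ rfl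
      simp only [nw, hsub, this]
      rfl
    simp only [hk]
    exact (tendsto_iff_norm_sub_tendsto_zero.mp hTl)
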